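/- Let μ ∈ ℝ and Λ ∈ ℂ, and set ζₙ(Λ) = √(n + 1/2 − Λ). Suppose (Cₙ) satisfies (n+1)^{1/2}(n+3/2)^{1/4}C_{n+1} + 2μ(n+1/2)^{1/4}ζₙ(Λ)Cₙ + n^{1/2}(n−1/2)^{1/4}C_{n−1} = 0 for all n ≥ 0. Then for every N ≥ 0, 2μ·Σ_{n=0}^N |Cₙ|²(n+1/2)^{1/2}·Im ζₙ(Λ) = −(N+1)^{1/2}((N+1)² − 1/4)^{1/4}·Im(C_{N+1}·C̄_N). -/
import Mathlib

open Finset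

theorem jacobi_summation_identity_zeta (μ : ℝ) (Λ : ℂ) (C : ℕ → ℂ)
    (ζ : ℕ → ℂ) (hζ : ∀ n : ℕ, ζ n = ((n : ℂ) + 1 / 2 - Λ) ^ ((1 : ℂ) / 2))
    (hrec : ∀ n : ℕ,
      ((((n : ℝ) + 1) ^ ((1 : ℝ) / 2) * ((n : ℝ) + 3 / 2) ^ ((1 : ℝ) / 4) : ℝ) : ℂ) * C (n + 1)
        + 2 * (μ : ℂ) * ((((n : ℝ) + 1 / 2) ^ ((1 : ℝ) / 4) : ℝ) : ℂ) * ζ n * C n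
        + (((n : ℝ) ^ ((1 : ℝ) / 2) * ((n : ℝ) - 1 / 2) ^ ((1 : ℝ) / 4) : ℝ) : ℂ) * C (n - 1)
        = 0) :
    ∀ N : ℕ, 2 * μ * ∑ n ∈ Finset.range (N + 1),
        ‖C n‖ ^ 2 * ((n : ℝ) + 1 / 2) ^ ((1 : ℝ) / 2) * (ζ n).im =
      -(((N : ℝ) + 1) ^ ((1 : ℝ) / 2) * (((N : ℝ) + 1) ^ 2 - 1 / 4) ^ ((1 : ℝ) / 4)) *
        (C (N + 1) * (starRingEnd ℂ) (C N)).im := by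
  have key : ∀ n : ℕ,
      (((n : ℝ) + 1) ^ ((1:ℝ)/2) * (((n : ℝ) + 1) ^ 2 - 1/4) ^ ((1:ℝ)/4))
          * (C (n+1) * (starRingEnd ℂ) (C n)).im
        + 2 * μ * (‖C n‖ ^ 2 * ((n : ℝ) + 1/2) ^ ((1:ℝ)/2) * (ζ n).im)
        + ((n : ℝ) ^ ((1:ℝ)/2) * ((n : ℝ) ^ 2 - 1/4) ^ ((1:ℝ)/4))
            * (C (n-1) * (starRingEnd ℂ) (C n)).im = 0 := by
    intro n
    set r1 : ℝ := ((n : ℝ) + 1) ^ ((1:ℝ)/2) * ((n : ℝ) + 3/2) ^ ((1:ℝ)/4) with hr1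
    set r2 : ℝ := ((n : ℝ) + 1/2) ^ ((1:ℝ)/4) with hr2
    set r3 : ℝ := (n : ℝ) ^ ((1:ℝ)/2) * ((n : ℝ) - 1/2) ^ ((1:ℝ)/4) with hr3
    have hcc : C n * (starRingEnd ℂ) (C n) = ((‖C n‖ : ℝ) : ℂ) ^ 2 := by
      simp [Complex.mul_conj']
    have hmul : ((r1 * r2 : ℝ) : ℂ) * (C (n+1) * (starRingEnd ℂ) (C n))
        + ((2 * μ * (‖C n‖ ^ 2 * r2 ^ 2) : ℝ) : ℂ) * ζ n
        + ((r3 * r2 : ℝ) : ℂ) * (C (n-1) * (starRingEnd ℂ) (C n)) = 0 := by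
      push_cast
      linear_combination ((r2 : ℂ) * (starRingEnd ℂ) (C n)) * hrec n
        - (2 * (μ:ℂ) * (r2:ℂ)^2 * ζ n) * hcc
    have him := congrArg Complex.im hmul
    simp only [Complex.add_im, Complex.im_ofReal_mul, Complex.zero_im] at him
    have h2 : (0:ℝ) ≤ (n : ℝ) + 1/2 := by positivity
    have hr2sq : r2 ^ 2 = ((n : ℝ) + 1/2) ^ ((1:ℝ)/2) := by
      rw [hr2, ← Real.rpow_natCast (((n : ℝ) + 1/2) ^ ((1:ℝ)/4)) 2, ← Real.rpow_mul h2]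
      norm_num
    have h12 : r1 * r2 = ((n : ℝ) + 1) ^ ((1:ℝ)/2) * (((n : ℝ) + 1) ^ 2 - 1/4) ^ ((1:ℝ)/4) := by
      rw [hr1, hr2, mul_assoc, ← Real.mul_rpow (by positivity) h2]
      ring_nf
    have h32 : r3 * r2 = (n : ℝ) ^ ((1:ℝ)/2) * ((n : ℝ) ^ 2 - 1/4) ^ ((1:ℝ)/4) := by
      rcases Nat.eq_zero_or_pos n with h | h
      · subst h
        simp [hr3, hr2, Real.zero_rpow (by norm_num : (1:ℝ)/2 ≠ 0)]
      · have hn : (1:ℝ) ≤ (n:ℝ) := by exact_mod_cast h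
        rw [hr3, hr2, mul_assoc, ← Real.mul_rpow (by linarith) h2]
        ring_nf
    rw [h12, h32, hr2sq] at him
    linarith [him]
  intro N
  induction N with
  | zero =>
    have h := key 0
    simp only [Nat.cast_zero] at h
    rw [Real.zero_rpow (by norm_num : (1:ℝ)/2 ≠ 0)] at h
    rw [Finset.sum_range_one]
    push_cast at h ⊢
    linear_combination h
  | succ N ih =>
    have h := key (N + 1)
    have hsub : (N + 1) - 1 = N := rfl
    rw [hsub] at h
    have hswap : (C N * (starRingEnd ℂ) (C (N+1))).im
        = -(C (N+1) * (starRingEnd ℂ) (C N)).im := by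
      have : C N * (starRingEnd ℂ) (C (N+1))
          = (starRingEnd ℂ) (C (N+1) * (starRingEnd ℂ) (C N)) := by
        simp [mul_comm]
      rw [this, Complex.conj_im]
    rw [hswap] at h
    rw [Finset.sum_range_succ, mul_add, ih]
    push_cast at h ⊢
    linear_combination h
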